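/- Let p0, p1 ≥ 0 with p0 + p1 > 0. For every Bloch vector (x,y,z) with x² + y² + z² ≤ 1, the coherent information of Λ2(ρ) = (p0 ρ + p1 XρX)/(p0+p1) satisfies S(Λ2(ρ(x,y,z))) − S(Λ2^c(ρ(x,y,z))) ≤ 1 − h(p1/(p0+p1)), with equality at (x,y,z) = (0,0,0). Hence max_ρ [S(Λ2(ρ)) − S(Λ2^c(ρ))] = 1 − h(p1/(p0+p1)). -/

import Mathlib

open Matrix

noncomputable section

/-- Pauli matrix X. -/
def PX : Matrix (Fin 2) (Fin 2) ℂ := !![0, 1; 1, 0]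

/-- Pauli matrix Y. -/
def PY : Matrix (Fin 2) (Fin 2) ℂ := !![0, -Complex.I; Complex.I, 0]

/-- Pauli matrix Z. -/
def PZ : Matrix (Fin 2) (Fin 2) ℂ := !![1, 0; 0, -1]

/-- The covariant Pauli channel `Λ(ρ) = p₀ ρ + p₁ (XρX + YρY) + p₃ ZρZ`. -/
def pauliChannel (p0 p1 p3 : ℝ) (ρ : Matrix (Fin 2) (Fin 2) ℂ) : Matrix (Fin 2) (Fin 2) ℂ :=
  (p0 : ℂ) • ρ + (p1 : ℂ) • (PX * ρ * PX + PY * ρ * PY) + (p3 : ℂ) • (PZ * ρ * PZ)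

/-- The qubit state with Bloch vector `(x, y, z)`. -/
def blochState (x y z : ℝ) : Matrix (Fin 2) (Fin 2) ℂ :=
  (1 / 2 : ℂ) • ((1 : Matrix (Fin 2) (Fin 2) ℂ) + (x : ℂ) • PX + (y : ℂ) • PY + (z : ℂ) • PZ)

/-- Von Neumann entropy (base-2) of a Hermitian matrix, via its eigenvalues. -/
def vN {n : ℕ} (A : Matrix (Fin n) (Fin n) ℂ) : ℝ :=
  if h : A.IsHermitian then -∑ i, h.eigenvalues i * Real.logb 2 (h.eigenvalues i) else 0

/-- Multiset of eigenvalues (with multiplicity) of a Hermitian matrix. -/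
def eigs {n : ℕ} (A : Matrix (Fin n) (Fin n) ℂ) : Multiset ℝ :=
  if h : A.IsHermitian then Finset.univ.val.map h.eigenvalues else 0

/-- The binary entropy function `h(t) = -t log₂ t - (1-t) log₂ (1-t)`. -/
def binEnt (t : ℝ) : ℝ := -(t * Real.logb 2 t) - (1 - t) * Real.logb 2 (1 - t)

/-- The channel `Λ₂(ρ) = (p₀ ρ + p₁ XρX)/(p₀+p₁)`. -/
def lam2 (p0 p1 : ℝ) (ρ : Matrix (Fin 2) (Fin 2) ℂ) : Matrix (Fin 2) (Fin 2) ℂ :=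
  ((p0 / (p0 + p1) : ℝ) : ℂ) • ρ + ((p1 / (p0 + p1) : ℝ) : ℂ) • (PX * ρ * PX)

/-- The complementary channel of `Λ₂`, applied to the Bloch state `ρ(x,y,z)`. -/
def lam2c (p0 p1 x : ℝ) : Matrix (Fin 2) (Fin 2) ℂ :=
  !![((p0 / (p0 + p1) : ℝ) : ℂ), ((Real.sqrt (p0 * p1) / (p0 + p1) * x : ℝ) : ℂ);
     ((Real.sqrt (p0 * p1) / (p0 + p1) * x : ℝ) : ℂ), ((p1 / (p0 + p1) : ℝ) : ℂ)]

/-! ### Auxiliary facts about `binEnt` -/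

lemma binEnt_eq (t : ℝ) : binEnt t = Real.binEntropy t / Real.log 2 := by
  simp only [binEnt, Real.binEntropy, Real.logb, Real.log_inv]
  ring

lemma binEnt_one_sub (t : ℝ) : binEnt (1 - t) = binEnt t := by
  rw [binEnt_eq, binEnt_eq, Real.binEntropy_one_sub]

lemma binEnt_half : binEnt (1/2 : ℝ) = 1 := by
  rw [binEnt_eq, show (1/2 : ℝ) = 2⁻¹ by norm_num, Real.binEntropy_two_inv,
    div_self (Real.log_pos (by norm_num)).ne']

lemma binEnt_le_one (t : ℝ) : binEnt t ≤ 1 := by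
  rw [binEnt_eq, div_le_one (Real.log_pos (by norm_num))]
  exact Real.binEntropy_le_log_two

/-- `log (1+s) - log (1-s) ≥ 2 s` on `[0,1)`. -/
lemma log_ratio_ge (s : ℝ) (h0 : 0 ≤ s) (h1 : s < 1) :
    2 * s ≤ Real.log (1 + s) - Real.log (1 - s) := by
  have key : MonotoneOn (fun s : ℝ => Real.log (1 + s) - Real.log (1 - s) - 2 * s)
      (Set.Ico 0 1) := by
    apply monotoneOn_of_hasDerivWithinAt_nonneg
      (f' := fun x => 1 / (1 + x) - -1 / (1 - x) - 2 * 1) (convex_Ico 0 1)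
    · apply ContinuousOn.sub (ContinuousOn.sub ?_ ?_) (by fun_prop)
      · exact (continuousOn_const.add continuousOn_id).log (fun x hx => by
          simp only [Set.mem_Ico, id, Pi.add_apply, Pi.sub_apply] at hx ⊢; nlinarith [hx.1])
      · exact (continuousOn_const.sub continuousOn_id).log (fun x hx => by
          simp only [Set.mem_Ico, id, Pi.add_apply, Pi.sub_apply] at hx ⊢; nlinarith [hx.2])
    · intro x hx
      rw [interior_Ico] at hx
      obtain ⟨hx0, hx1⟩ := hx
      have h1x : (1:ℝ) + x ≠ 0 := by nlinarith
      have h2x : (1:ℝ) - x ≠ 0 := by nlinarith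
      exact ((((hasDerivAt_id' x).const_add 1).log h1x).sub
        (((hasDerivAt_id' x).const_sub 1).log h2x)).sub
        ((hasDerivAt_id' x).const_mul 2) |>.hasDerivWithinAt
    · intro x hx
      rw [interior_Ico] at hx
      obtain ⟨hx0, hx1⟩ := hx
      have h1x : (0:ℝ) < 1 + x := by linarith
      have h2x : (0:ℝ) < 1 - x := by linarith
      have : 1 / (1 + x) - -1 / (1 - x) - 2 * 1 = (2 * x ^ 2) / ((1 + x) * (1 - x)) := by
        field_simp
        ring
      rw [this]
      positivity
  have h := key (Set.left_mem_Ico.mpr (by norm_num)) (Set.mem_Ico.mpr ⟨h0, h1⟩) h0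
  simp only [add_zero, sub_zero, mul_zero, Real.log_one, sub_self, zero_sub] at h
  linarith

lemma psi_anti :
    AntitoneOn (fun s : ℝ => (s⁻¹ - s) * (Real.log (1 + s) - Real.log (1 - s)))
      (Set.Ioo 0 1) := by
  apply antitoneOn_of_hasDerivWithinAt_nonpos
    (f' := fun x => (-(x^2)⁻¹ - 1) * (Real.log (1 + x) - Real.log (1 - x))
      + (x⁻¹ - x) * (1 / (1 + x) - -1 / (1 - x))) (convex_Ioo 0 1)
  · apply ContinuousOn.mul
    · exact (continuousOn_inv₀.mono (fun x hx => (Set.mem_Ioo.mp hx).1.ne')).sub continuousOn_id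
    · apply ContinuousOn.sub
      · exact (continuousOn_const.add continuousOn_id).log (fun x hx => by
          simp only [Set.mem_Ioo, id, Pi.add_apply, Pi.sub_apply] at hx ⊢; nlinarith [hx.1])
      · exact (continuousOn_const.sub continuousOn_id).log (fun x hx => by
          simp only [Set.mem_Ioo, id, Pi.add_apply, Pi.sub_apply] at hx ⊢; nlinarith [hx.2])
  · intro x hx
    rw [interior_Ioo] at hx
    obtain ⟨hx0, hx1⟩ := hx
    have h1x : (1:ℝ) + x ≠ 0 := by nlinarith
    have h2x : (1:ℝ) - x ≠ 0 := by nlinarith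
    exact (((hasDerivAt_inv hx0.ne').sub (hasDerivAt_id' x)).mul
      ((((hasDerivAt_id' x).const_add 1).log h1x).sub
        (((hasDerivAt_id' x).const_sub 1).log h2x))).hasDerivWithinAt
  · intro x hx
    rw [interior_Ioo] at hx
    obtain ⟨hx0, hx1⟩ := hx
    have h1x : (0:ℝ) < 1 + x := by linarith
    have h2x : (0:ℝ) < 1 - x := by linarith
    have e2 : (x⁻¹ - x) * (1 / (1 + x) - -1 / (1 - x)) = 2 / x := by
      field_simp
      ring
    have hcoef : (-(x^2)⁻¹ - 1 : ℝ) ≤ 0 := by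
      have : (0:ℝ) < (x^2)⁻¹ := by positivity
      linarith
    have hA := log_ratio_ge x hx0.le hx1
    have t1 : (-(x^2)⁻¹ - 1) * (Real.log (1 + x) - Real.log (1 - x))
        ≤ (-(x^2)⁻¹ - 1) * (2 * x) := mul_le_mul_of_nonpos_left hA hcoef
    have e3 : (-(x^2)⁻¹ - 1) * (2 * x) + 2 / x = -2 * x := by
      field_simp
      ring
    rw [e2]
    nlinarith

/-- derivative of `v ↦ binEntropy ((1+√v)/2)` at `v ∈ (0,1)`. -/
lemma hasDerivAt_bb {v : ℝ} (h0 : 0 < v) (h1 : v < 1) :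
    HasDerivAt (fun w : ℝ => Real.binEntropy ((1 + Real.sqrt w)/2))
      ((Real.log (1 - (1 + Real.sqrt v)/2) - Real.log ((1 + Real.sqrt v)/2))
        * (1 / (2 * Real.sqrt v) / 2)) v := by
  have hs0 : 0 < Real.sqrt v := Real.sqrt_pos.mpr h0
  have hs1 : Real.sqrt v < 1 := (Real.sqrt_lt' one_pos).mpr (by nlinarith)
  have hp : HasDerivAt (fun w : ℝ => (1 + Real.sqrt w)/2) (1 / (2 * Real.sqrt v) / 2) v :=
    ((Real.hasDerivAt_sqrt h0.ne').const_add 1).div_const 2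
  have hp0 : (1 + Real.sqrt v)/2 ≠ 0 := by positivity
  have hp1 : (1 + Real.sqrt v)/2 ≠ 1 := by
    intro h
    have : Real.sqrt v = 1 := by linarith [h]
    linarith
  have := (Real.hasDerivAt_binEntropy hp0 hp1).comp v hp
  simpa [Function.comp_def] using this

/-- rewrite `log(1-p) - log p` for `p = (1+s)/2`. -/
lemma log_p_eq (s : ℝ) (h0 : 0 ≤ s) (h1 : s < 1) :
    Real.log (1 - (1 + s)/2) - Real.log ((1 + s)/2)
      = -(Real.log (1 + s) - Real.log (1 - s)) := by
  have e1 : 1 - (1 + s)/2 = (1 - s)/2 := by ring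
  rw [e1, Real.log_div (by linarith) (by norm_num), Real.log_div (by linarith) (by norm_num)]
  ring

/-- The master inequality, in natural-log units. -/
lemma master (c t : ℝ) (hc0 : 0 ≤ c) (hc1 : c ≤ 1) (ht0 : 0 ≤ t) (ht1 : t ≤ 1) :
    Real.binEntropy ((1 + Real.sqrt t)/2) + Real.binEntropy ((1 + Real.sqrt c)/2) ≤
      Real.log 2 + Real.binEntropy ((1 + Real.sqrt (c + (1 - c) * t))/2) := by
  rcases eq_or_lt_of_le hc1 with hc1' | hc1'
  · subst hc1'
    have h1 : (1:ℝ) + (1 - 1) * t = 1 := by ring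
    rw [h1]
    have hle : Real.binEntropy ((1 + Real.sqrt t)/2) ≤ Real.log 2 :=
      Real.binEntropy_le_log_two
    simp only [Real.sqrt_one]
    norm_num
    exact hle
  · set B : ℝ → ℝ := fun v => Real.binEntropy ((1 + Real.sqrt v)/2) with hB
    have hBcont : Continuous B := by
      apply Real.binEntropy_continuous.comp
      fun_prop
    have hmono : MonotoneOn (fun u : ℝ => B (c + (1 - c) * u) - B u) (Set.Icc 0 1) := by
      apply monotoneOn_of_hasDerivWithinAt_nonneg
        (f' := fun u =>
          (Real.log (1 - (1 + Real.sqrt (c + (1 - c) * u))/2)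
            - Real.log ((1 + Real.sqrt (c + (1 - c) * u))/2))
            * (1 / (2 * Real.sqrt (c + (1 - c) * u)) / 2) * ((1 - c) * 1)
          - (Real.log (1 - (1 + Real.sqrt u)/2) - Real.log ((1 + Real.sqrt u)/2))
            * (1 / (2 * Real.sqrt u) / 2)) (convex_Icc 0 1)
      · exact ((hBcont.comp (by fun_prop)).sub hBcont).continuousOn
      · intro u hu
        rw [interior_Icc] at hu
        obtain ⟨hu0, hu1⟩ := hu
        have hv0 : 0 < c + (1 - c) * u := by nlinarith
        have hv1 : c + (1 - c) * u < 1 := by nlinarith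
        have haff : HasDerivAt (fun u : ℝ => c + (1 - c) * u) ((1 - c) * 1) u :=
          ((hasDerivAt_id' u).const_mul (1 - c)).const_add c
        have h2 := (hasDerivAt_bb hv0 hv1).comp u haff
        have h3 := hasDerivAt_bb hu0 hu1
        exact ((h2.congr_of_eventuallyEq (by filter_upwards with w; simp [Function.comp, hB])).sub
          h3).hasDerivWithinAt
      · intro u hu
        rw [interior_Icc] at hu
        obtain ⟨hu0, hu1⟩ := hu
        have hv0 : 0 < c + (1 - c) * u := by nlinarith
        have hv1 : c + (1 - c) * u < 1 := by nlinarith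
        set a := Real.sqrt u with ha
        set b := Real.sqrt (c + (1 - c) * u) with hbdef
        have ha0 : 0 < a := Real.sqrt_pos.mpr hu0
        have ha1 : a < 1 := (Real.sqrt_lt' one_pos).mpr (by nlinarith)
        have hb0 : 0 < b := Real.sqrt_pos.mpr hv0
        have hb1 : b < 1 := (Real.sqrt_lt' one_pos).mpr (by nlinarith)
        have hab : a ≤ b := Real.sqrt_le_sqrt (by nlinarith)
        have ha2 : a ^ 2 = u := Real.sq_sqrt hu0.le
        have hb2 : b ^ 2 = c + (1 - c) * u := Real.sq_sqrt hv0.le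
        have hpsi := psi_anti (Set.mem_Ioo.mpr ⟨ha0, ha1⟩) (Set.mem_Ioo.mpr ⟨hb0, hb1⟩) hab
        simp only at hpsi
        set Aa := Real.log (1 + a) - Real.log (1 - a) with hAa
        set Ab := Real.log (1 + b) - Real.log (1 - b) with hAb
        have hAa0 : 0 ≤ Aa := le_trans (by positivity) (log_ratio_ge a ha0.le ha1)
        have hAb0 : 0 ≤ Ab := le_trans (by positivity) (log_ratio_ge b hb0.le hb1)
        have hkey : (1 - b^2) * a * Ab ≤ (1 - a^2) * b * Aa := by
          have h := mul_le_mul_of_nonneg_right hpsi (le_of_lt (mul_pos ha0 hb0))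
          have e1 : (b⁻¹ - b) * Ab * (a * b) = (1 - b^2) * a * Ab := by
            field_simp
          have e2 : (a⁻¹ - a) * Aa * (a * b) = (1 - a^2) * b * Aa := by
            field_simp
          rw [e1, e2] at h
          exact h
        have h1mb : 1 - b^2 = (1 - c) * (1 - a^2) := by rw [ha2, hb2]; ring
        have hkey2 : (1 - c) * a * Ab ≤ b * Aa := by
          have h1a2 : 0 < 1 - a^2 := by nlinarith
          have := hkey
          rw [h1mb] at this
          nlinarith
        rw [log_p_eq a ha0.le ha1, log_p_eq b hb0.le hb1]
        have e3 : -Ab * (1 / (2 * b) / 2) * ((1 - c) * 1) - -Aa * (1 / (2 * a) / 2)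
            = (b * Aa - (1 - c) * a * Ab) / (4 * a * b) := by
          field_simp
          ring
        rw [e3]
        apply div_nonneg (by linarith) (by positivity)
    have h := hmono (Set.left_mem_Icc.mpr zero_le_one) (Set.mem_Icc.mpr ⟨ht0, ht1⟩) ht0
    simp only [mul_zero, add_zero] at h
    have hB0 : B 0 = Real.log 2 := by
      simp [hB, Real.sqrt_zero, show (1:ℝ)/2 = 2⁻¹ by norm_num]
    rw [hB0] at h
    simp only [hB] at h ⊢
    linarith

/-- Antitonicity of `u ↦ binEnt ((1+√u)/2)` on `[0,1]`, `binEnt` version. -/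
lemma bb_anti {u v : ℝ} (hu : 0 ≤ u) (huv : u ≤ v) (hv : v ≤ 1) :
    binEnt ((1 + Real.sqrt v)/2) ≤ binEnt ((1 + Real.sqrt u)/2) := by
  have hsu : Real.sqrt u ≤ 1 := (Real.sqrt_le_sqrt (huv.trans hv)).trans_eq Real.sqrt_one
  have hsv : Real.sqrt v ≤ 1 := (Real.sqrt_le_sqrt hv).trans_eq Real.sqrt_one
  have hmem_u : (1 + Real.sqrt u)/2 ∈ Set.Icc (2⁻¹:ℝ) 1 := by
    constructor
    · have := Real.sqrt_nonneg u; norm_num; linarith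
    · linarith
  have hmem_v : (1 + Real.sqrt v)/2 ∈ Set.Icc (2⁻¹:ℝ) 1 := by
    constructor
    · have := Real.sqrt_nonneg v; norm_num; linarith
    · linarith
  have hle : (1 + Real.sqrt u)/2 ≤ (1 + Real.sqrt v)/2 := by
    have := Real.sqrt_le_sqrt huv; linarith
  have h := Real.binEntropy_strictAntiOn.antitoneOn hmem_u hmem_v hle
  rw [binEnt_eq, binEnt_eq]
  exact (div_le_div_iff_of_pos_right (Real.log_pos (by norm_num))).mpr h

/-- Master inequality in `binEnt` version. -/
lemma bb_master {c t : ℝ} (hc0 : 0 ≤ c) (hc1 : c ≤ 1) (ht0 : 0 ≤ t) (ht1 : t ≤ 1) :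
    binEnt ((1 + Real.sqrt t)/2) + binEnt ((1 + Real.sqrt c)/2) ≤
      1 + binEnt ((1 + Real.sqrt (c + (1 - c) * t))/2) := by
  have h := master c t hc0 hc1 ht0 ht1
  have hl2 : (0:ℝ) < Real.log 2 := Real.log_pos (by norm_num)
  rw [binEnt_eq, binEnt_eq, binEnt_eq, ← add_div,
    show (1:ℝ) + Real.binEntropy ((1 + Real.sqrt (c + (1 - c) * t))/2) / Real.log 2
      = (Real.log 2 + Real.binEntropy ((1 + Real.sqrt (c + (1 - c) * t))/2)) / Real.log 2 by
        field_simp]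
  exact div_le_div_of_nonneg_right h hl2.le


/-! ### Eigenvalue computations -/

lemma trace_eq_sum_eigs {m : Type*} [Fintype m] [DecidableEq m] {A : Matrix m m ℂ}
    (hA : A.IsHermitian) : A.trace = ∑ i, (hA.eigenvalues i : ℂ) := by
  exact hA.trace_eq_sum_eigenvalues

lemma vN_eq_binEnt (A : Matrix (Fin 2) (Fin 2) ℂ) (hA : A.IsHermitian) (d : ℝ)
    (htr : A.trace = 1) (hdet : A.det = (d : ℂ)) :
    vN A = binEnt ((1 + Real.sqrt (1 - 4 * d)) / 2) := by
  set e0 := hA.eigenvalues 0 with he0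
  set e1 := hA.eigenvalues 1 with he1
  have hsum : e0 + e1 = 1 := by
    have h := trace_eq_sum_eigs hA
    rw [htr, Fin.sum_univ_two] at h
    rw [he0, he1]
    exact_mod_cast h.symm
  have hprod : e0 * e1 = d := by
    have h := hA.det_eq_prod_eigenvalues
    rw [hdet, Fin.prod_univ_two] at h
    simp only [RCLike.ofReal_alg, Complex.real_smul, mul_one] at h
    rw [he0, he1]
    exact_mod_cast h.symm
  have hsq : 1 - 4 * d = (e0 - e1) ^ 2 := by nlinarith
  have hs : Real.sqrt (1 - 4 * d) = |e0 - e1| := by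
    rw [hsq, Real.sqrt_sq_eq_abs]
  rw [vN, dif_pos hA, Fin.sum_univ_two, hs]
  rcases le_or_gt e1 e0 with h | h
  · rw [abs_of_nonneg (by linarith)]
    have h2 : (1 + (e0 - e1)) / 2 = e0 := by linarith
    rw [h2, binEnt]
    have h3 : 1 - e0 = e1 := by linarith
    rw [h3]
    ring
  · rw [abs_of_neg (by linarith)]
    have h2 : (1 + -(e0 - e1)) / 2 = e1 := by linarith
    rw [h2, binEnt]
    have h3 : 1 - e1 = e0 := by linarith
    rw [h3]
    ring

/-! ### Concrete matrix computations -/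

variable {p0 p1 x y z : ℝ}

lemma bloch_eq (x y z : ℝ) : blochState x y z =
    !![(1 + (z:ℂ))/2, ((x:ℂ) - (y:ℂ)*Complex.I)/2;
       ((x:ℂ) + (y:ℂ)*Complex.I)/2, (1 - (z:ℂ))/2] := by
  ext i j
  fin_cases i <;> fin_cases j <;>
    simp [blochState, PX, PY, PZ, Matrix.one_apply] <;> ring

lemma lam2_explicit (p0 p1 x y z : ℝ) (hpos : 0 < p0 + p1) :
    lam2 p0 p1 (blochState x y z) =
    !![(1 + (((p0-p1)/(p0+p1) : ℝ):ℂ)*z)/2,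
        ((x:ℂ) - (((p0-p1)/(p0+p1) : ℝ):ℂ)*y*Complex.I)/2;
       ((x:ℂ) + (((p0-p1)/(p0+p1) : ℝ):ℂ)*y*Complex.I)/2,
        (1 - (((p0-p1)/(p0+p1) : ℝ):ℂ)*z)/2] := by
  have hne : (p0 + p1 : ℂ) ≠ 0 := by exact_mod_cast hpos.ne'
  rw [lam2, bloch_eq]
  ext i j
  fin_cases i <;> fin_cases j <;>
  · simp only [Matrix.add_apply, Matrix.smul_apply, Matrix.mul_apply, Fin.sum_univ_two, PX,
      Matrix.cons_val', Matrix.cons_val_zero, Matrix.cons_val_one, Matrix.head_cons,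
      Matrix.head_fin_const, Matrix.empty_val', Matrix.cons_val_fin_one, smul_eq_mul, Matrix.of_apply]
    push_cast
    field_simp
    ring

lemma lam2_herm (p0 p1 x y z : ℝ) (hpos : 0 < p0 + p1) :
    (lam2 p0 p1 (blochState x y z)).IsHermitian := by
  rw [lam2_explicit p0 p1 x y z hpos]
  show _ᴴ = _
  ext i j
  fin_cases i <;> fin_cases j <;>
    simp [Matrix.conjTranspose_apply, Complex.ext_iff]

lemma lam2_trace (p0 p1 x y z : ℝ) (hpos : 0 < p0 + p1) :
    (lam2 p0 p1 (blochState x y z)).trace = 1 := by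
  rw [lam2_explicit p0 p1 x y z hpos, Matrix.trace_fin_two_of]
  ring

lemma lam2_det (p0 p1 x y z : ℝ) (hpos : 0 < p0 + p1) :
    (lam2 p0 p1 (blochState x y z)).det =
      (((1 - (x^2 + ((p0-p1)/(p0+p1))^2 * (y^2 + z^2)))/4 : ℝ) : ℂ) := by
  rw [lam2_explicit p0 p1 x y z hpos, Matrix.det_fin_two_of]
  push_cast
  ring_nf
  rw [Complex.I_sq]
  ring

lemma vN_lam2 (p0 p1 x y z : ℝ) (hpos : 0 < p0 + p1) :
    vN (lam2 p0 p1 (blochState x y z)) =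
      binEnt ((1 + Real.sqrt (x^2 + ((p0-p1)/(p0+p1))^2 * (y^2 + z^2)))/2) := by
  rw [vN_eq_binEnt _ (lam2_herm p0 p1 x y z hpos) _ (lam2_trace p0 p1 x y z hpos)
    (lam2_det p0 p1 x y z hpos)]
  congr 3
  ring

lemma lam2c_herm (p0 p1 x : ℝ) : (lam2c p0 p1 x).IsHermitian := by
  show _ᴴ = _
  ext i j
  fin_cases i <;> fin_cases j <;> simp [lam2c, Matrix.conjTranspose_apply, Complex.conj_ofReal]

lemma lam2c_trace (p0 p1 x : ℝ) (hpos : 0 < p0 + p1) : (lam2c p0 p1 x).trace = 1 := by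
  rw [lam2c, Matrix.trace_fin_two_of, ← Complex.ofReal_add]
  rw [show p0 / (p0 + p1) + p1 / (p0 + p1) = (1:ℝ) by field_simp]
  norm_num

lemma lam2c_det (p0 p1 x : ℝ) (h0 : 0 ≤ p0) (h1 : 0 ≤ p1) :
    (lam2c p0 p1 x).det = ((p0 * p1 * (1 - x^2) / (p0 + p1)^2 : ℝ) : ℂ) := by
  rw [lam2c, Matrix.det_fin_two_of, ← Complex.ofReal_mul, ← Complex.ofReal_mul,
    ← Complex.ofReal_sub]
  congr 1
  have key : Real.sqrt (p0 * p1) * Real.sqrt (p0 * p1) = p0 * p1 :=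
    Real.mul_self_sqrt (mul_nonneg h0 h1)
  generalize hq : Real.sqrt (p0*p1) = q at key ⊢
  rcases eq_or_ne (p0+p1) 0 with hz | hz
  · simp [hz]
  · field_simp
    linear_combination (-(x^2)) * key

lemma vN_lam2c (p0 p1 x : ℝ) (h0 : 0 ≤ p0) (h1 : 0 ≤ p1) (hpos : 0 < p0 + p1) :
    vN (lam2c p0 p1 x) =
      binEnt ((1 + Real.sqrt (((p0-p1)/(p0+p1))^2
        + (1 - ((p0-p1)/(p0+p1))^2) * x^2))/2) := by
  rw [vN_eq_binEnt _ (lam2c_herm p0 p1 x) _ (lam2c_trace p0 p1 x hpos)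
    (lam2c_det p0 p1 x h0 h1)]
  congr 3
  field_simp
  ring

lemma binEnt_c_eq (p0 p1 : ℝ) (hpos : 0 < p0 + p1) :
    binEnt ((1 + Real.sqrt (((p0-p1)/(p0+p1))^2))/2) = binEnt (p1 / (p0 + p1)) := by
  rw [Real.sqrt_sq_eq_abs]
  rcases abs_cases ((p0-p1)/(p0+p1)) with ⟨h, _⟩ | ⟨h, _⟩ <;> rw [h]
  · rw [show (1 + (p0-p1)/(p0+p1))/2 = 1 - p1/(p0+p1) by field_simp; ring]
    exact binEnt_one_sub _
  · rw [show (1 + -((p0-p1)/(p0+p1)))/2 = p1/(p0+p1) by field_simp; ring]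

/-- Coherent information of `Λ₂`: for every Bloch state,
`S(Λ₂(ρ(x,y,z))) - S(Λ₂ᶜ(ρ(x,y,z))) ≤ 1 - h(p₁/(p₀+p₁))`, with equality at the
maximally mixed state; hence `max_ρ [S(Λ₂(ρ)) - S(Λ₂ᶜ(ρ))] = 1 - h(p₁/(p₀+p₁))`. -/
theorem lam2_coherent_information (p0 p1 : ℝ) (h0 : 0 ≤ p0) (h1 : 0 ≤ p1)
    (hpos : 0 < p0 + p1) :
    (∀ x y z : ℝ, x ^ 2 + y ^ 2 + z ^ 2 ≤ 1 →
        vN (lam2 p0 p1 (blochState x y z)) - vN (lam2c p0 p1 x) ≤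
          1 - binEnt (p1 / (p0 + p1))) ∧
    vN (lam2 p0 p1 (blochState 0 0 0)) - vN (lam2c p0 p1 0) = 1 - binEnt (p1 / (p0 + p1)) ∧
    IsGreatest
      {d : ℝ | ∃ x y z : ℝ, x ^ 2 + y ^ 2 + z ^ 2 ≤ 1 ∧
        d = vN (lam2 p0 p1 (blochState x y z)) - vN (lam2c p0 p1 x)}
      (1 - binEnt (p1 / (p0 + p1))) := by
  have hc0 : 0 ≤ ((p0 - p1)/(p0 + p1))^2 := sq_nonneg _
  have hc1 : ((p0 - p1)/(p0 + p1))^2 ≤ 1 := by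
    rw [div_pow, div_le_one (by positivity)]
    nlinarith
  have main : ∀ x y z : ℝ, x ^ 2 + y ^ 2 + z ^ 2 ≤ 1 →
      vN (lam2 p0 p1 (blochState x y z)) - vN (lam2c p0 p1 x) ≤
        1 - binEnt (p1 / (p0 + p1)) := by
    intro x y z hball
    have hx2 : x^2 ≤ 1 := by nlinarith [sq_nonneg y, sq_nonneg z]
    have hR1 : x^2 + ((p0 - p1)/(p0 + p1))^2 * (y^2 + z^2) ≤ 1 := by
      nlinarith [sq_nonneg y, sq_nonneg z]
    rw [vN_lam2 p0 p1 x y z hpos, vN_lam2c p0 p1 x h0 h1 hpos]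
    have step1 := bb_anti (sq_nonneg x)
      (le_add_of_nonneg_right (by positivity) :
        x^2 ≤ x^2 + ((p0 - p1)/(p0 + p1))^2 * (y^2 + z^2)) hR1
    have step2 := bb_master hc0 hc1 (sq_nonneg x) hx2
    have hbc := binEnt_c_eq p0 p1 hpos
    linarith
  refine ⟨main, ?_, ?_, ?_⟩
  · rw [vN_lam2 p0 p1 0 0 0 hpos, vN_lam2c p0 p1 0 h0 h1 hpos]
    have e1 : (0:ℝ)^2 + ((p0-p1)/(p0+p1))^2 * ((0:ℝ)^2 + (0:ℝ)^2) = 0 := by ring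
    have e2 : ((p0-p1)/(p0+p1))^2 + (1 - ((p0-p1)/(p0+p1))^2) * (0:ℝ)^2
        = ((p0-p1)/(p0+p1))^2 := by ring
    rw [e1, e2, Real.sqrt_zero, binEnt_c_eq p0 p1 hpos,
      show (1 + (0:ℝ))/2 = 1/2 by norm_num, binEnt_half]
  · exact ⟨0, 0, 0, by norm_num, by
      rw [vN_lam2 p0 p1 0 0 0 hpos, vN_lam2c p0 p1 0 h0 h1 hpos]
      have e1 : (0:ℝ)^2 + ((p0-p1)/(p0+p1))^2 * ((0:ℝ)^2 + (0:ℝ)^2) = 0 := by ring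
      have e2 : ((p0-p1)/(p0+p1))^2 + (1 - ((p0-p1)/(p0+p1))^2) * (0:ℝ)^2
          = ((p0-p1)/(p0+p1))^2 := by ring
      rw [e1, e2, Real.sqrt_zero, binEnt_c_eq p0 p1 hpos,
        show (1 + (0:ℝ))/2 = 1/2 by norm_num, binEnt_half]⟩
  · rintro d ⟨x, y, z, hball, rfl⟩
    exact main x y z hball

end
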